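/- arXiv:2204.13466 — 3 statements merged into one kernel-verified Lean document; each statement's English description precedes it below -/
import Mathlib

section
/- A network N is a cluster network if and only if N is semi-regular, separated, and phylogenetic. -/
namespace PhyloNet

/-- A (rooted) network on a set `X` of taxa: a finite directed acyclic graph with a
unique vertex of indegree 0 (the root), whose vertices of outdegree 0 (the leaves)
are exactly the elements of `X` (via the injection `leafEmb`). -/
structure Network (X : Type) where
  V : Type
  [fintypeV : Fintype V]
  E : V → V → Prop
  leafEmb : X → V
  leafEmb_inj : Function.Injective leafEmb
  acyclic : ∀ u v : V, E u v → ¬ Relation.ReflTransGen E v u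
  root_unique : ∃! r : V, ∀ u : V, ¬ E u r
  leaf_iff : ∀ v : V, (∀ w : V, ¬ E v w) ↔ ∃ x : X, leafEmb x = v

attribute [instance] Network.fintypeV

variable {X : Type}

namespace Network

/-- `reach u v` : there is a directed path (possibly trivial) from `u` to `v`,
i.e. `v ⪯ u`. -/
def reach (N : Network X) : N.V → N.V → Prop := Relation.ReflTransGen N.E

/-- The cluster of a vertex: the set of leaves reachable from it. -/
def cluster (N : Network X) (v : N.V) : Set X := {x | N.reach v (N.leafEmb x)}

/-- The clustering system of a network. -/
def CS (N : Network X) : Set (Set X) := Set.range N.cluster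

noncomputable def inDeg (N : Network X) (v : N.V) : ℕ := {u | N.E u v}.ncard
noncomputable def outDeg (N : Network X) (v : N.V) : ℕ := {w | N.E v w}.ncard

def IsHybrid (N : Network X) (v : N.V) : Prop := 1 < N.inDeg v
def IsTreeVertex (N : Network X) (v : N.V) : Prop := N.inDeg v ≤ 1
def IsLeaf (N : Network X) (v : N.V) : Prop := ∀ w : N.V, ¬ N.E v w

/-- The arc `(u,w)` is a shortcut: `w ≺ v` for some child `v ≠ w` of `u`. -/
def IsShortcut (N : Network X) (u w : N.V) : Prop :=
  N.E u w ∧ ∃ v : N.V, N.E u v ∧ v ≠ w ∧ N.reach v w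

def ShortcutFree (N : Network X) : Prop := ∀ u w : N.V, ¬ N.IsShortcut u w

/-- Path-cluster comparability. -/
def PCC (N : Network X) : Prop :=
  ∀ u v : N.V, (N.reach u v ∨ N.reach v u) ↔
    (N.cluster u ⊆ N.cluster v ∨ N.cluster v ⊆ N.cluster u)

def SemiRegular (N : Network X) : Prop := N.ShortcutFree ∧ N.PCC

/-- `N` is regular iff `v ↦ C(v)` is a digraph isomorphism onto the Hasse diagram
of `𝒞_N` (ordered by inclusion). -/
def Regular (N : Network X) : Prop :=
  Function.Injective N.cluster ∧
  ∀ u v : N.V, N.E u v ↔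
    (N.cluster v ⊂ N.cluster u ∧
      ¬ ∃ w : N.V, N.cluster v ⊂ N.cluster w ∧ N.cluster w ⊂ N.cluster u)

def Separated (N : Network X) : Prop := ∀ v : N.V, N.IsHybrid v → N.outDeg v = 1

def Phylogenetic (N : Network X) : Prop := ¬ ∃ v : N.V, N.outDeg v = 1 ∧ N.inDeg v ≤ 1

def Binary (N : Network X) : Prop :=
  (∀ v : N.V, N.IsTreeVertex v → (N.IsLeaf v ∨ N.outDeg v = 2)) ∧
  (∀ v : N.V, N.IsHybrid v → N.inDeg v = 2 ∧ N.outDeg v = 1)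

def TreeChild (N : Network X) : Prop :=
  ∀ v : N.V, ¬ N.IsLeaf v → ∃ u : N.V, N.E v u ∧ N.inDeg u = 1

/-- The underlying undirected (simple) graph of a network. -/
def UG (N : Network X) : SimpleGraph N.V where
  Adj u v := u ≠ v ∧ (N.E u v ∨ N.E v u)
  symm := ⟨fun _ _ h => ⟨Ne.symm h.1, Or.symm h.2⟩⟩
  loopless := ⟨fun _ h => h.1 rfl⟩

/-- A set of vertices is biconnected if it induces a connected undirected graph
with no cutvertex. -/
def IsBiconn (N : Network X) (B : Set N.V) : Prop :=
  (N.UG.induce B).Connected ∧ ∀ v ∈ B, (N.UG.induce (B \ {v})).Preconnected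

/-- A block: a maximal biconnected set of vertices. -/
def IsBlock (N : Network X) (B : Set N.V) : Prop :=
  N.IsBiconn B ∧ ∀ B' : Set N.V, B ⊆ B' → N.IsBiconn B' → B' = B

/-- The set `B` contains an undirected cycle (`B` is a non-trivial block when it is
a block). -/
def HasCycleIn (N : Network X) (B : Set N.V) : Prop :=
  ∃ (v : N.V) (c : N.UG.Walk v v), c.IsCycle ∧ ∀ w ∈ c.support, w ∈ B

/-- Level-1: each block contains at most one hybrid vertex that is not
`⪯`-maximal in the block. -/
def Level1 (N : Network X) : Prop :=
  ∀ B : Set N.V, N.IsBlock B →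
    Set.Subsingleton {v : N.V | v ∈ B ∧ N.IsHybrid v ∧ ∃ u ∈ B, u ≠ v ∧ N.reach u v}

/-- The set `B` (with the edges of the underlying undirected graph between its
members) is exactly an undirected cycle. -/
def IsCycleSet (N : Network X) (B : Set N.V) : Prop :=
  ∃ (v : N.V) (c : N.UG.Walk v v), c.IsCycle ∧ (∀ w : N.V, w ∈ c.support ↔ w ∈ B) ∧
    ∀ u w : N.V, (N.UG.Adj u w ∧ u ∈ B ∧ w ∈ B) ↔ s(u, w) ∈ c.edges

/-- A galled tree: every non-trivial block is an undirected cycle. -/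
def GalledTree (N : Network X) : Prop :=
  ∀ B : Set N.V, N.IsBlock B → N.HasCycleIn B → N.IsCycleSet B

/-- Quasi-binary: hybrid vertices have indegree 2 and outdegree 1, and the
`⪯`-maximal vertex of every non-trivial block has outdegree 2. -/
def QuasiBinary (N : Network X) : Prop :=
  (∀ v : N.V, N.IsHybrid v → N.inDeg v = 2 ∧ N.outDeg v = 1) ∧
  ∀ B : Set N.V, N.IsBlock B → N.HasCycleIn B →
    ∀ v ∈ B, (∀ u ∈ B, N.reach u v → u = v) → N.outDeg v = 2

/-- `LCA A`: the `⪯`-minimal vertices among the common ancestors of `A`. -/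
def LCA (N : Network X) (A : Set X) : Set N.V :=
  {v : N.V | A ⊆ N.cluster v ∧ ∀ u : N.V, A ⊆ N.cluster u → N.reach v u → u = v}

/-- An lca-network: every nonempty set of leaves has a unique least common
ancestor. -/
def LcaNetwork (N : Network X) : Prop :=
  ∀ A : Set X, A.Nonempty → ∃ v : N.V, N.LCA A = {v}

/-- A strong lca-network. -/
def StrongLca (N : Network X) : Prop :=
  N.LcaNetwork ∧
  ∀ A : Set X, A.Nonempty → ∃ x ∈ A, ∃ y ∈ A, N.LCA ({x, y} : Set X) = N.LCA A

/-- Cluster networks in the sense of Huson & Rupp. -/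
def ClusterNetwork (N : Network X) : Prop :=
  N.PCC ∧
  (∀ u v : N.V, N.cluster u = N.cluster v ↔
    (u = v ∨ (N.IsHybrid v ∧ N.E v u) ∨ (N.IsHybrid u ∧ N.E u v))) ∧
  (∀ u v : N.V, N.E v u →
    ¬ ∃ w : N.V, N.cluster u ⊂ N.cluster w ∧ N.cluster w ⊂ N.cluster v) ∧
  (∀ v : N.V, N.IsHybrid v →
    ∃ u : N.V, N.E v u ∧ (∀ w : N.V, N.E v w → w = u) ∧ N.IsTreeVertex u)

/-- The multiplicity of a cluster in the cluster multiset `𝓜_N`. -/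
noncomputable def multiplicity (N : Network X) (C : Set X) : ℕ :=
  Nat.card {v : N.V // N.cluster v = C}

/-- Isomorphism of networks on the same leaf set `X`, fixing every leaf. -/
def Isomorphic (N N' : Network X) : Prop :=
  ∃ φ : N.V ≃ N'.V, (∀ u v : N.V, N.E u v ↔ N'.E (φ u) (φ v)) ∧
    ∀ x : X, φ (N.leafEmb x) = N'.leafEmb x

end Network

/-- A clustering system on `X`. -/
def IsClusteringSystem {X : Type} (𝒞 : Set (Set X)) : Prop :=
  ∅ ∉ 𝒞 ∧ Set.univ ∈ 𝒞 ∧ ∀ x : X, {x} ∈ 𝒞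

/-- Two sets overlap if `A ∩ B ∉ {∅, A, B}`. -/
def Overlap {X : Type} (A B : Set X) : Prop :=
  (A ∩ B).Nonempty ∧ A ∩ B ≠ A ∧ A ∩ B ≠ B

/-- Closed (under pairwise nonempty intersections). -/
def IsClosedCS {X : Type} (𝒞 : Set (Set X)) : Prop :=
  ∀ A ∈ 𝒞, ∀ B ∈ 𝒞, (A ∩ B).Nonempty → A ∩ B ∈ 𝒞

/-- Property (L). -/
def PropertyL {X : Type} (𝒞 : Set (Set X)) : Prop :=
  ∀ C₁ ∈ 𝒞, ∀ C₂ ∈ 𝒞, ∀ C₃ ∈ 𝒞, Overlap C₁ C₂ → Overlap C₁ C₃ → C₁ ∩ C₂ = C₁ ∩ C₃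

/-- Weak hierarchy. -/
def WeakHierarchy {X : Type} (𝒞 : Set (Set X)) : Prop :=
  ∀ C₁ ∈ 𝒞, ∀ C₂ ∈ 𝒞, ∀ C₃ ∈ 𝒞,
    C₁ ∩ C₂ ∩ C₃ = C₁ ∩ C₂ ∨ C₁ ∩ C₂ ∩ C₃ = C₁ ∩ C₃ ∨
    C₁ ∩ C₂ ∩ C₃ = C₂ ∩ C₃ ∨ C₁ ∩ C₂ ∩ C₃ = ∅

/-- Property (N3O): no three distinct pairwise overlapping clusters. -/
def N3O {X : Type} (𝒞 : Set (Set X)) : Prop :=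
  ¬ ∃ C₁ ∈ 𝒞, ∃ C₂ ∈ 𝒞, ∃ C₃ ∈ 𝒞,
    C₁ ≠ C₂ ∧ C₁ ≠ C₃ ∧ C₂ ≠ C₃ ∧ Overlap C₁ C₂ ∧ Overlap C₁ C₃ ∧ Overlap C₂ C₃

/-- Property (2-Inc). -/
def TwoInc {X : Type} (𝒞 : Set (Set X)) : Prop :=
  ∀ C ∈ 𝒞,
    {A : Set X | A ∈ 𝒞 ∧ A ⊂ C ∧ ∀ B ∈ 𝒞, B ⊂ C → A ⊆ B → A = B}.ncard ≤ 2 ∧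
    {A : Set X | A ∈ 𝒞 ∧ C ⊂ A ∧ ∀ B ∈ 𝒞, C ⊂ B → B ⊆ A → A = B}.ncard ≤ 2

/-- The intersection closure: all nonempty intersections of nonempty subfamilies. -/
def interClosure {X : Type} (𝒞 : Set (Set X)) : Set (Set X) :=
  {A : Set X | A.Nonempty ∧ ∃ S : Set (Set X), S ⊆ 𝒞 ∧ S.Nonempty ∧ A = ⋂₀ S}

namespace Network

variable (N : Network X)

lemma reach_trans' {u v w : N.V} (h1 : N.reach u v) (h2 : N.reach v w) : N.reach u w :=
  Relation.ReflTransGen.trans h1 h2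

lemma not_E_self {v : N.V} : ¬ N.E v v := fun h => N.acyclic v v h Relation.ReflTransGen.refl

lemma reach_antisymm {u v : N.V} (h1 : N.reach u v) (h2 : N.reach v u) : u = v := by
  rcases Relation.ReflTransGen.cases_head h1 with h | ⟨c, hc, hcv⟩
  · exact h
  · exact absurd (Relation.ReflTransGen.trans hcv h2) (N.acyclic u c hc)

lemma cluster_mono {u v : N.V} (h : N.reach u v) : N.cluster v ⊆ N.cluster u :=
  fun _ hx => Relation.ReflTransGen.trans h hx

lemma cluster_subset_of_E {u v : N.V} (h : N.E u v) : N.cluster v ⊆ N.cluster u :=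
  N.cluster_mono (Relation.ReflTransGen.single h)

lemma not_leaf_of_E {u v : N.V} (h : N.E u v) (x : X) : N.leafEmb x ≠ u :=
  fun heq => (N.leaf_iff u).2 ⟨x, heq⟩ v h

lemma isHybrid_of_two_parents {v p q : N.V} (hp : N.E p v) (hq : N.E q v) (hne : p ≠ q) :
    N.IsHybrid v := by
  have hsub : ({p, q} : Set N.V) ⊆ {u | N.E u v} := by
    intro a ha
    rcases ha with rfl | ha
    · exact hp
    · rw [Set.mem_singleton_iff] at ha; subst ha; exact hq
  have h2 : ({p, q} : Set N.V).ncard = 2 := Set.ncard_pair hne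
  have := Set.ncard_le_ncard hsub (Set.toFinite _)
  unfold IsHybrid inDeg
  omega

lemma hybrid_two_parents {v : N.V} (hv : N.IsHybrid v) :
    ∃ p q : N.V, N.E p v ∧ N.E q v ∧ p ≠ q := by
  unfold IsHybrid inDeg at hv
  rw [Set.one_lt_ncard_iff (Set.toFinite _)] at hv
  obtain ⟨p, q, hp, hq, hne⟩ := hv
  exact ⟨p, q, hp, hq, hne⟩

lemma outDeg_one_iff {v : N.V} :
    N.outDeg v = 1 ↔ ∃ u, N.E v u ∧ ∀ w, N.E v w → w = u := by
  unfold outDeg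
  rw [Set.ncard_eq_one]
  constructor
  · rintro ⟨a, ha⟩
    refine ⟨a, ?_, fun w hw => ?_⟩
    · have : a ∈ {w | N.E v w} := ha ▸ rfl
      exact this
    · have : w ∈ ({a} : Set N.V) := ha ▸ hw
      exact this
  · rintro ⟨u, hu, huniq⟩
    refine ⟨u, ?_⟩
    ext w
    exact ⟨fun hw => huniq w hw, fun hw => by rw [Set.mem_singleton_iff] at hw; subst hw; exact hu⟩

lemma cluster_eq_of_unique_child {v u : N.V} (hu : N.E v u) (huniq : ∀ w, N.E v w → w = u) :
    N.cluster v = N.cluster u := by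
  apply Set.Subset.antisymm ?_ (N.cluster_subset_of_E hu)
  intro x hx
  rcases Relation.ReflTransGen.cases_head hx with h | ⟨c, hc, hcx⟩
  · exact absurd h.symm (N.not_leaf_of_E hu x)
  · rwa [huniq c hc] at hcx

/-- Key structural lemma: from semi-regularity + separation + phylogenicity,
a hybrid vertex has a unique child which is a tree vertex. -/
lemma hybrid_child (hSF : N.ShortcutFree) (hPCC : N.PCC) (hSep : N.Separated)
    {v : N.V} (hv : N.IsHybrid v) :
    ∃ u, N.E v u ∧ (∀ w, N.E v w → w = u) ∧ N.IsTreeVertex u := by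
  obtain ⟨u, hu, huniq⟩ := (N.outDeg_one_iff).1 (hSep v hv)
  refine ⟨u, hu, huniq, ?_⟩
  by_contra hub
  have hhyb : N.IsHybrid u := by
    unfold IsHybrid; unfold IsTreeVertex at hub; omega
  obtain ⟨p, q, hp, hq, hpq⟩ := N.hybrid_two_parents hhyb
  have key : ∀ r : N.V, N.E r u → r ≠ v → False := by
    intro r hr hrv
    have hcl : N.cluster v = N.cluster u := N.cluster_eq_of_unique_child hu huniq
    have hsub : N.cluster v ⊆ N.cluster r := hcl ▸ N.cluster_subset_of_E hr
    have := (hPCC v r).2 (Or.inl hsub)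
    rcases this with h | h
    · rcases Relation.ReflTransGen.cases_head h with h' | ⟨c, hc, hcr⟩
      · exact hrv h'.symm
      · have hcu : c = u := huniq c hc
        rw [hcu] at hcr
        exact N.acyclic r u hr hcr
    · rcases Relation.ReflTransGen.cases_head h with h' | ⟨c, hc, hcv⟩
      · exact hrv h'
      · by_cases hcu : c = u
        · rw [hcu] at hcv
          exact N.acyclic v u hu hcv
        · exact hSF r u ⟨hr, c, hc, hcu, Relation.ReflTransGen.trans hcv
            (Relation.ReflTransGen.single hu)⟩
  by_cases hpv : p = v
  · subst hpv
    exact key q hq (fun h => hpq h.symm)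
  · exact key p hp hpv

/-- Key structural lemma for equal clusters along a reachability relation. -/
lemma eq_cluster_step (hSF : N.ShortcutFree) (hPCC : N.PCC) (hPhy : N.Phylogenetic)
    {u v : N.V} (hc : N.cluster u = N.cluster v) (hr : N.reach u v) (hne : u ≠ v) :
    N.IsHybrid u ∧ ∃ c, N.E u c ∧ (∀ w, N.E u w → w = c) ∧ N.reach c v ∧
      N.cluster c = N.cluster v := by
  rcases Relation.ReflTransGen.cases_head hr with h | ⟨c, huc, hcv⟩
  · exact absurd h hne
  have hcc : N.cluster c = N.cluster v := by
    apply Set.Subset.antisymm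
    · intro x hx
      have : x ∈ N.cluster u := N.cluster_subset_of_E huc hx
      rwa [hc] at this
    · exact N.cluster_mono hcv
  have huniq : ∀ w, N.E u w → w = c := by
    intro w hw
    by_contra hwc
    have hsub : N.cluster w ⊆ N.cluster c := by
      have : N.cluster w ⊆ N.cluster u := N.cluster_subset_of_E hw
      rw [hc, ← hcc] at this
      exact this
    rcases (hPCC w c).2 (Or.inl hsub) with h | h
    · exact hSF u c ⟨huc, w, hw, hwc, h⟩
    · exact hSF u w ⟨hw, c, huc, fun h' => hwc h'.symm, h⟩
  have hout : N.outDeg u = 1 := (N.outDeg_one_iff).2 ⟨c, huc, huniq⟩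
  have hhyb : N.IsHybrid u := by
    unfold IsHybrid
    by_contra hle
    exact hPhy ⟨u, hout, by omega⟩
  exact ⟨hhyb, c, huc, huniq, hcv, hcc⟩

lemma eq_cluster_reach (hSF : N.ShortcutFree) (hPCC : N.PCC) (hSep : N.Separated)
    (hPhy : N.Phylogenetic) {u v : N.V}
    (hc : N.cluster u = N.cluster v) (hr : N.reach u v) (hne : u ≠ v) :
    N.IsHybrid u ∧ N.E u v := by
  obtain ⟨hhyb, c, huc, huniq, hcv, hcc⟩ := N.eq_cluster_step hSF hPCC hPhy hc hr hne
  have hcveq : c = v := by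
    by_contra hcne
    have hchyb : N.IsHybrid c := (N.eq_cluster_step hSF hPCC hPhy hcc hcv hcne).1
    obtain ⟨u', hu', huniq', htree⟩ := N.hybrid_child hSF hPCC hSep hhyb
    have : c = u' := huniq' c huc
    subst this
    unfold IsHybrid at hchyb; unfold IsTreeVertex at htree; omega
  exact ⟨hhyb, hcveq ▸ huc⟩

end Network

/-- A network is a cluster network iff it is semi-regular,
separated, and phylogenetic. -/
theorem clusterNetwork_iff_semiRegular_separated_phylogenetic (X : Type)
    [Fintype X] (N : Network X) :
    N.ClusterNetwork ↔ (N.SemiRegular ∧ N.Separated ∧ N.Phylogenetic) := by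
  constructor
  · rintro ⟨hPCC, hCE, hNI, hHC⟩
    refine ⟨⟨?_, hPCC⟩, ?_, ?_⟩
    · -- shortcut-free
      rintro u w ⟨huw, v, huv, hvw, hreach⟩
      have huv_ne : u ≠ v := fun h => N.not_E_self (h ▸ huv)
      have hwv : N.cluster w ⊆ N.cluster v := N.cluster_mono hreach
      have hwvne : N.cluster w ≠ N.cluster v := by
        intro heq
        rcases (hCE w v).1 heq with h | ⟨hvhyb, hEvw⟩ | ⟨hwhyb, hEwv⟩
        · exact hvw h.symm
        · obtain ⟨c, hc, hcu, htree⟩ := hHC v hvhyb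
          have hwc : w = c := hcu w hEvw
          have hwh : N.IsHybrid w := N.isHybrid_of_two_parents huw hEvw huv_ne
          rw [← hwc] at htree
          unfold Network.IsHybrid at hwh; unfold Network.IsTreeVertex at htree; omega
        · exact N.acyclic w v hEwv hreach
      have hvu : N.cluster v ⊆ N.cluster u := N.cluster_subset_of_E huv
      have hvune : N.cluster v ≠ N.cluster u := by
        intro heq
        rcases (hCE v u).1 heq with h | ⟨huhyb, hEuv'⟩ | ⟨hvhyb, hEvu⟩
        · exact huv_ne h.symm
        · obtain ⟨c, hc, hcu, htree⟩ := hHC u huhyb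
          exact hvw ((hcu v huv).trans (hcu w huw).symm)
        · exact N.acyclic u v huv (Relation.ReflTransGen.single hEvu)
      exact hNI w u huw ⟨v, (Set.ssubset_iff_subset_ne).2 ⟨hwv, hwvne⟩,
        (Set.ssubset_iff_subset_ne).2 ⟨hvu, hvune⟩⟩
    · -- separated
      intro v hv
      obtain ⟨u, hu, huniq, _⟩ := hHC v hv
      exact (N.outDeg_one_iff).2 ⟨u, hu, huniq⟩
    · -- phylogenetic
      rintro ⟨v, hout, hin⟩
      obtain ⟨u, hu, huniq⟩ := (N.outDeg_one_iff).1 hout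
      have hcl := N.cluster_eq_of_unique_child hu huniq
      rcases (hCE v u).1 hcl with rfl | ⟨huhyb, hEuv⟩ | ⟨hvhyb, hEvu⟩
      · exact N.not_E_self hu
      · exact N.acyclic v u hu (Relation.ReflTransGen.single hEuv)
      · unfold Network.IsHybrid at hvhyb; omega
  · rintro ⟨⟨hSF, hPCC⟩, hSep, hPhy⟩
    refine ⟨hPCC, ?_, ?_, ?_⟩
    · intro u v
      constructor
      · intro hcl
        by_cases huv : u = v
        · exact Or.inl huv
        · rcases (hPCC u v).2 (Or.inl hcl.subset) with hr | hr
          · exact Or.inr (Or.inr (N.eq_cluster_reach hSF hPCC hSep hPhy hcl hr huv))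
          · exact Or.inr (Or.inl
              (N.eq_cluster_reach hSF hPCC hSep hPhy hcl.symm hr (Ne.symm huv)))
      · rintro (rfl | ⟨hvhyb, hEvu⟩ | ⟨huhyb, hEuv⟩)
        · rfl
        · obtain ⟨c, hc, huniq⟩ := (N.outDeg_one_iff).1 (hSep v hvhyb)
          have hcl := N.cluster_eq_of_unique_child hc huniq
          rw [huniq u hEvu]
          exact hcl.symm
        · obtain ⟨c, hc, huniq⟩ := (N.outDeg_one_iff).1 (hSep u huhyb)
          have hcl := N.cluster_eq_of_unique_child hc huniq
          rw [huniq v hEuv]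
          exact hcl
    · intro u v hEvu
      rintro ⟨w, hsw1, hsw2⟩
      have hwu : N.reach w u := by
        rcases (hPCC u w).2 (Or.inl hsw1.subset) with h | h
        · exact absurd (Set.Subset.antisymm hsw1.subset (N.cluster_mono h)) hsw1.ne
        · exact h
      have hvw : N.reach v w := by
        rcases (hPCC w v).2 (Or.inl hsw2.subset) with h | h
        · exact absurd (Set.Subset.antisymm hsw2.subset (N.cluster_mono h)) hsw2.ne
        · exact h
      rcases Relation.ReflTransGen.cases_head hvw with h | ⟨c, hc, hcw⟩
      · exact hsw2.ne (congrArg N.cluster h.symm)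
      · by_cases hcu : c = u
        · rw [hcu] at hcw
          exact hsw1.ne (congrArg N.cluster (N.reach_antisymm hcw hwu))
        · exact hSF v u ⟨hEvu, c, hc, hcu, Relation.ReflTransGen.trans hcw hwu⟩
    · intro v hv
      exact N.hybrid_child hSF hPCC hSep hv

end PhyloNet
end

section
/- Every tree-child network satisfies (PCC), i.e., for all vertices u, v of a tree-child network N, u and v are ⪯_N-comparable if and only if C(u) ⊆ C(v) or C(v) ⊆ C(u). -/
namespace PhyloNet

variable {X : Type}

/-- The child relation of a network is well-founded. -/
lemma Network.wf_child (N : Network X) : WellFounded (fun a b : N.V => N.E b a) := by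
  have : IsIrrefl N.V (Relation.TransGen fun a b : N.V => N.E b a) := by
    constructor
    intro a h
    rcases Relation.TransGen.tail'_iff.mp h with ⟨b, hab, hba⟩
    exact N.acyclic a b hba (Relation.reflTransGen_swap.mp hab)
  have hwf := Finite.wellFounded_of_trans_of_irrefl
      (Relation.TransGen fun a b : N.V => N.E b a)
  exact Subrelation.wf
    (r := Relation.TransGen fun a b : N.V => N.E b a)
    (fun h => Relation.TransGen.single h) hwf

/-- In a tree-child network, every vertex has a leaf below it such that any
vertex above that leaf is comparable with it. -/
lemma Network.treeChild_leaf (N : Network X) (hTC : N.TreeChild) :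
    ∀ u : N.V, ∃ x : X, N.reach u (N.leafEmb x) ∧
      ∀ v : N.V, N.reach v (N.leafEmb x) → N.reach v u ∨ N.reach u v := by
  intro u
  induction u using N.wf_child.induction with
  | _ u ih =>
    by_cases hL : N.IsLeaf u
    · rcases (N.leaf_iff u).mp hL with ⟨x, hx⟩
      exact ⟨x, hx ▸ Relation.ReflTransGen.refl, fun v hv => Or.inl (hx ▸ hv)⟩
    · rcases hTC u hL with ⟨c, huc, hdeg⟩
      rcases ih c huc with ⟨x, hcx, hx⟩
      refine ⟨x, Relation.ReflTransGen.head huc hcx, fun v hv => ?_⟩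
      rcases hx v hv with hvc | hcv
      · rcases hvc.cases_tail with rfl | ⟨p, hvp, hpc⟩
        · exact Or.inr (Relation.ReflTransGen.single huc)
        · have : p = u := by
            rcases Set.ncard_eq_one.mp hdeg with ⟨a, ha⟩
            have h1 : p ∈ {q | N.E q c} := hpc
            have h2 : u ∈ {q | N.E q c} := huc
            rw [ha] at h1 h2
            exact h1.trans h2.symm
          exact Or.inl (this ▸ hvp)
      · exact Or.inr ((Relation.ReflTransGen.single huc).trans hcv)

/-- Every tree-child network satisfies (PCC). -/
theorem treeChild_implies_PCC (X : Type) [Fintype X] (N : Network X)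
    (hTC : N.TreeChild) :
    ∀ u v : N.V, (N.reach u v ∨ N.reach v u) ↔
      (N.cluster u ⊆ N.cluster v ∨ N.cluster v ⊆ N.cluster u) := by
  intro u v
  constructor
  · rintro (h | h)
    · exact Or.inr (fun x hx => h.trans hx)
    · exact Or.inl (fun x hx => h.trans hx)
  · rintro (h | h)
    · rcases N.treeChild_leaf hTC u with ⟨x, hux, hx⟩
      exact (hx v (h hux)).symm.imp id id
    · rcases N.treeChild_leaf hTC v with ⟨x, hvx, hx⟩
      exact hx u (h hvx)

end PhyloNet
end

section
/- A clustering system 𝒞 satisfies property (L) if and only if its intersection closure 𝓘(𝒞) satisfies property (L). -/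
namespace PhyloNet

variable {X : Type}

section LAux

variable {X : Type}

private lemma overlap_symm {A B : Set X} (h : Overlap A B) : Overlap B A := by
  obtain ⟨h1, h2, h3⟩ := h
  exact ⟨by rwa [Set.inter_comm], by rwa [Set.inter_comm], by rwa [Set.inter_comm]⟩

private lemma tri {A B : Set X} (h : (A ∩ B).Nonempty) :
    A ⊆ B ∨ B ⊆ A ∨ Overlap A B := by
  by_cases h1 : A ∩ B = A
  · exact Or.inl (Set.inter_eq_left.mp h1)
  by_cases h2 : A ∩ B = B
  · exact Or.inr (Or.inl (Set.inter_eq_right.mp h2))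
  exact Or.inr (Or.inr ⟨h, h1, h2⟩)

/-- If `C` overlaps `⋂₀ T`, then `C` overlaps some member of `T`. -/
private lemma exists_overlap_mem {C : Set X} {T : Set (Set X)}
    (hC : Overlap C (⋂₀ T)) : ∃ D ∈ T, Overlap C D := by
  by_contra h
  push_neg at h
  have hall : ∀ D ∈ T, C ⊆ D := by
    intro D hD
    have hne : (C ∩ D).Nonempty :=
      hC.1.mono (fun x hx => ⟨hx.1, Set.mem_sInter.mp hx.2 D hD⟩)
    rcases tri hne with h1 | h1 | h1
    · exact h1
    · exact absurd (Set.inter_eq_right.mpr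
        (fun x hx => h1 (Set.mem_sInter.mp hx D hD))) hC.2.2
    · exact absurd h1 (h D hD)
  exact hC.2.1 (Set.inter_eq_left.mpr (Set.subset_sInter hall))

/-- Step 1: if `C ∈ 𝒞` overlaps `⋂₀ T`, then `C ∩ ⋂₀ T = C ∩ D` for any `D ∈ 𝒞`
overlapping `C`. -/
private lemma inter_sInter_eq {𝒞 : Set (Set X)} (hL : PropertyL 𝒞) {C : Set X}
    (hCmem : C ∈ 𝒞) {T : Set (Set X)} (hT : T ⊆ 𝒞)
    (hC : Overlap C (⋂₀ T)) {D : Set X} (hDmem : D ∈ 𝒞) (hCD : Overlap C D) :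
    C ∩ ⋂₀ T = C ∩ D := by
  obtain ⟨D₀, hD₀T, hCD₀⟩ := exists_overlap_mem hC
  have key : C ∩ D₀ = C ∩ D := hL C hCmem D₀ (hT hD₀T) D hDmem hCD₀ hCD
  apply Set.Subset.antisymm
  · intro x hx
    rw [← key]
    exact ⟨hx.1, Set.mem_sInter.mp hx.2 D₀ hD₀T⟩
  · intro x hx
    refine ⟨hx.1, Set.mem_sInter.mpr fun D' hD' => ?_⟩
    have hne : (C ∩ D').Nonempty :=
      hC.1.mono (fun y hy => ⟨hy.1, Set.mem_sInter.mp hy.2 D' hD'⟩)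
    rcases tri hne with h1 | h1 | h1
    · exact h1 hx.1
    · exact absurd (Set.inter_eq_right.mpr
        (fun y hy => h1 (Set.mem_sInter.mp hy D' hD'))) hC.2.2
    · have e := hL C hCmem D hDmem D' (hT hD') hCD h1
      rw [e] at hx
      exact hx.2

/-- Crux, nested case: `C ⊆ C'`, both overlapping `⋂₀ T`. -/
private lemma crux_sub {𝒞 : Set (Set X)} (hL : PropertyL 𝒞) {C C' : Set X}
    (hCmem : C ∈ 𝒞) (hC'mem : C' ∈ 𝒞) (hsub : C ⊆ C')
    {T : Set (Set X)} (hT : T ⊆ 𝒞)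
    (hC : Overlap C (⋂₀ T)) (hC' : Overlap C' (⋂₀ T)) :
    C ∩ ⋂₀ T = C' ∩ ⋂₀ T := by
  obtain ⟨D, hDT, hCD⟩ := exists_overlap_mem hC
  have hBD : ⋂₀ T ⊆ D := fun x hx => Set.mem_sInter.mp hx D hDT
  have e1 : C ∩ ⋂₀ T = C ∩ D := inter_sInter_eq hL hCmem hT hC (hT hDT) hCD
  have hne1 : (D ∩ C').Nonempty := hCD.1.mono (fun y hy => ⟨hy.2, hsub hy.1⟩)
  rcases tri hne1 with h1 | h1 | h1
  · -- D ⊆ C'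
    obtain ⟨D', hD'T, hC'D'⟩ := exists_overlap_mem hC'
    have hBD' : ⋂₀ T ⊆ D' := fun x hx => Set.mem_sInter.mp hx D' hD'T
    have e2 : C' ∩ ⋂₀ T = C' ∩ D' := inter_sInter_eq hL hC'mem hT hC' (hT hD'T) hC'D'
    have hne2 : (D' ∩ C).Nonempty := hC.1.mono (fun y hy => ⟨hBD' hy.2, hy.1⟩)
    rcases tri hne2 with h2 | h2 | h2
    · -- D' ⊆ C
      exact absurd (Set.inter_eq_right.mpr (hBD'.trans h2)) hC.2.2
    · -- C ⊆ D'
      have hBne : (⋂₀ T).Nonempty := hC.1.mono Set.inter_subset_right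
      have hne3 : (D ∩ D').Nonempty := hBne.mono (fun y hy => ⟨hBD hy, hBD' hy⟩)
      rcases tri hne3 with h3 | h3 | h3
      · -- D ⊆ D' : then D = ⋂₀ T and use (L) at D
        have hDB : D ⊆ ⋂₀ T := by
          intro x hx
          have hx' : x ∈ C' ∩ D' := ⟨h1 hx, h3 hx⟩
          rw [← e2] at hx'
          exact hx'.2
        have hDeq : D = ⋂₀ T := Set.Subset.antisymm hDB hBD
        have o1 : Overlap D C := by rw [hDeq]; exact overlap_symm hC
        have o2 : Overlap D C' := by rw [hDeq]; exact overlap_symm hC'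
        have e5 : D ∩ C = D ∩ C' := hL D (hT hDT) C hCmem C' hC'mem o1 o2
        rw [← hDeq, Set.inter_comm C D, Set.inter_comm C' D]
        exact e5
      · -- D' ⊆ D
        exact absurd (Set.inter_eq_left.mpr (h2.trans h3)) hCD.2.1
      · -- Overlap D D'
        have e3 : D ∩ C = D ∩ D' :=
          hL D (hT hDT) C hCmem D' (hT hD'T) (overlap_symm hCD) h3
        have e4 : D' ∩ C' = D' ∩ D :=
          hL D' (hT hD'T) C' hC'mem D (hT hDT) (overlap_symm hC'D') (overlap_symm h3)
        calc C ∩ ⋂₀ T = C ∩ D := e1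
          _ = D ∩ C := Set.inter_comm _ _
          _ = D ∩ D' := e3
          _ = D' ∩ D := Set.inter_comm _ _
          _ = D' ∩ C' := e4.symm
          _ = C' ∩ D' := Set.inter_comm _ _
          _ = C' ∩ ⋂₀ T := e2.symm
    · -- Overlap D' C
      have e3 : C ∩ ⋂₀ T = C ∩ D' :=
        inter_sInter_eq hL hCmem hT hC (hT hD'T) (overlap_symm h2)
      have e4 : D' ∩ C = D' ∩ C' :=
        hL D' (hT hD'T) C hCmem C' hC'mem h2 (overlap_symm hC'D')
      calc C ∩ ⋂₀ T = C ∩ D' := e3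
        _ = D' ∩ C := Set.inter_comm _ _
        _ = D' ∩ C' := e4
        _ = C' ∩ D' := Set.inter_comm _ _
        _ = C' ∩ ⋂₀ T := e2.symm
  · -- C' ⊆ D
    exact absurd (Set.inter_eq_left.mpr (hsub.trans h1)) hCD.2.1
  · -- Overlap D C'
    have e2 : C' ∩ ⋂₀ T = C' ∩ D :=
      inter_sInter_eq hL hC'mem hT hC' (hT hDT) (overlap_symm h1)
    have e3 : D ∩ C = D ∩ C' :=
      hL D (hT hDT) C hCmem C' hC'mem (overlap_symm hCD) h1
    calc C ∩ ⋂₀ T = C ∩ D := e1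
      _ = D ∩ C := Set.inter_comm _ _
      _ = D ∩ C' := e3
      _ = C' ∩ D := Set.inter_comm _ _
      _ = C' ∩ ⋂₀ T := e2.symm

/-- Crux: `C, C' ∈ 𝒞` with nonempty intersection, both overlapping `⋂₀ T`,
have the same intersection with `⋂₀ T`. -/
private lemma crux {𝒞 : Set (Set X)} (hL : PropertyL 𝒞) {C C' : Set X}
    (hCmem : C ∈ 𝒞) (hC'mem : C' ∈ 𝒞) (hne : (C ∩ C').Nonempty)
    {T : Set (Set X)} (hT : T ⊆ 𝒞)
    (hC : Overlap C (⋂₀ T)) (hC' : Overlap C' (⋂₀ T)) :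
    C ∩ ⋂₀ T = C' ∩ ⋂₀ T := by
  rcases tri hne with h | h | h
  · exact crux_sub hL hCmem hC'mem h hT hC hC'
  · exact (crux_sub hL hC'mem hCmem h hT hC' hC).symm
  · calc C ∩ ⋂₀ T = C ∩ C' := inter_sInter_eq hL hCmem hT hC hC'mem h
      _ = C' ∩ C := Set.inter_comm _ _
      _ = C' ∩ ⋂₀ T :=
        (inter_sInter_eq hL hC'mem hT hC' hCmem (overlap_symm h)).symm

/-- If `C ∈ 𝒞` overlaps two intersections, it meets them in the same set. -/
private lemma two_closures {𝒞 : Set (Set X)} (hL : PropertyL 𝒞) {C : Set X}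
    (hCmem : C ∈ 𝒞) {T T' : Set (Set X)} (hT : T ⊆ 𝒞) (hT' : T' ⊆ 𝒞)
    (h1 : Overlap C (⋂₀ T)) (h2 : Overlap C (⋂₀ T')) :
    C ∩ ⋂₀ T = C ∩ ⋂₀ T' := by
  obtain ⟨D, hDT, hCD⟩ := exists_overlap_mem h1
  calc C ∩ ⋂₀ T = C ∩ D := inter_sInter_eq hL hCmem hT h1 (hT hDT) hCD
    _ = C ∩ ⋂₀ T' := (inter_sInter_eq hL hCmem hT' h2 (hT hDT) hCD).symm

/-- Main step: if `⋂₀ S` overlaps `⋂₀ T`, then `⋂₀ S ∩ ⋂₀ T = C ∩ ⋂₀ T` for any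
`C ∈ S` overlapping `⋂₀ T`. -/
private lemma sInter_inter_eq {𝒞 : Set (Set X)} (hL : PropertyL 𝒞)
    {S T : Set (Set X)} (hS : S ⊆ 𝒞) (hT : T ⊆ 𝒞)
    (hAB : Overlap (⋂₀ S) (⋂₀ T)) {C : Set X} (hCS : C ∈ S)
    (hC : Overlap C (⋂₀ T)) :
    ⋂₀ S ∩ ⋂₀ T = C ∩ ⋂₀ T := by
  have hAne : (⋂₀ S).Nonempty := hAB.1.mono Set.inter_subset_left
  apply Set.Subset.antisymm
  · exact fun x hx => ⟨Set.mem_sInter.mp hx.1 C hCS, hx.2⟩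
  · intro x hx
    refine ⟨Set.mem_sInter.mpr fun C' hC' => ?_, hx.2⟩
    have hne : (C' ∩ ⋂₀ T).Nonempty :=
      hAB.1.mono (fun y hy => ⟨Set.mem_sInter.mp hy.1 C' hC', hy.2⟩)
    rcases tri hne with h1 | h1 | h1
    · exact absurd (Set.inter_eq_left.mpr
        (fun y hy => h1 (Set.mem_sInter.mp hy C' hC'))) hAB.2.1
    · exact h1 hx.2
    · have hCC' : (C ∩ C').Nonempty :=
        hAne.mono (fun y hy => ⟨Set.mem_sInter.mp hy C hCS, Set.mem_sInter.mp hy C' hC'⟩)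
      have e := crux hL (hS hCS) (hS hC') hCC' hT hC h1
      rw [e] at hx
      exact hx.1

/-- Cross, nested case: `C ⊆ C'`. -/
private lemma cross_sub {𝒞 : Set (Set X)} (hL : PropertyL 𝒞)
    {S S₂ S₃ : Set (Set X)} (hS : S ⊆ 𝒞) (hS₂ : S₂ ⊆ 𝒞) (hS₃ : S₃ ⊆ 𝒞)
    (h12 : Overlap (⋂₀ S) (⋂₀ S₂)) (h13 : Overlap (⋂₀ S) (⋂₀ S₃))
    {C C' : Set X} (hCS : C ∈ S) (hC'S : C' ∈ S)
    (hC2 : Overlap C (⋂₀ S₂)) (hC'3 : Overlap C' (⋂₀ S₃)) (hsub : C ⊆ C') :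
    C ∩ ⋂₀ S₂ = C' ∩ ⋂₀ S₃ := by
  have hAne : (⋂₀ S).Nonempty := h12.1.mono Set.inter_subset_left
  have hA2ne : (⋂₀ S₂).Nonempty := h12.1.mono Set.inter_subset_right
  have hA3ne : (⋂₀ S₃).Nonempty := h13.1.mono Set.inter_subset_right
  have hCC' : (C ∩ C').Nonempty :=
    hAne.mono (fun y hy => ⟨Set.mem_sInter.mp hy C hCS, Set.mem_sInter.mp hy C' hC'S⟩)
  have hCA3 : (C ∩ ⋂₀ S₃).Nonempty :=
    h13.1.mono (fun y hy => ⟨Set.mem_sInter.mp hy.1 C hCS, hy.2⟩)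
  rcases tri hCA3 with h3 | h3 | h3
  · -- C ⊆ ⋂₀ S₃ : contradiction
    exact absurd (Set.inter_eq_left.mpr
      (fun y hy => h3 (Set.mem_sInter.mp hy C hCS))) h13.2.1
  · -- ⋂₀ S₃ ⊆ C
    have hC'A2 : (C' ∩ ⋂₀ S₂).Nonempty :=
      h12.1.mono (fun y hy => ⟨Set.mem_sInter.mp hy.1 C' hC'S, hy.2⟩)
    rcases tri hC'A2 with h4 | h4 | h4
    · -- C' ⊆ ⋂₀ S₂ : contradiction
      exact absurd (Set.inter_eq_left.mpr
        (fun y hy => h4 (Set.mem_sInter.mp hy C' hC'S))) h12.2.1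
    · -- ⋂₀ S₂ ⊆ C' : hard case
      obtain ⟨D, hDT, hCD⟩ := exists_overlap_mem hC2
      have hA2D : ⋂₀ S₂ ⊆ D := fun y hy => Set.mem_sInter.mp hy D hDT
      have eCD : C ∩ ⋂₀ S₂ = C ∩ D :=
        inter_sInter_eq hL (hS hCS) hS₂ hC2 (hS₂ hDT) hCD
      have hDC' : (D ∩ C').Nonempty := hA2ne.mono (fun y hy => ⟨hA2D hy, h4 hy⟩)
      rcases tri hDC' with h5 | h5 | h5
      · -- D ⊆ C'
        obtain ⟨D', hD'T, hC'D'⟩ := exists_overlap_mem hC'3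
        have hA3D' : ⋂₀ S₃ ⊆ D' := fun y hy => Set.mem_sInter.mp hy D' hD'T
        have eC'D' : C' ∩ ⋂₀ S₃ = C' ∩ D' :=
          inter_sInter_eq hL (hS hC'S) hS₃ hC'3 (hS₃ hD'T) hC'D'
        have hD'C : (D' ∩ C).Nonempty := hA3ne.mono (fun y hy => ⟨hA3D' hy, h3 hy⟩)
        rcases tri hD'C with h6 | h6 | h6
        · -- D' ⊆ C : contradiction
          exact absurd (Set.inter_eq_right.mpr (h6.trans hsub)) hC'D'.2.2
        · -- C ⊆ D'
          have hDD' : (D ∩ D').Nonempty := hCD.1.mono (fun y hy => ⟨hy.2, h6 hy.1⟩)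
          rcases tri hDD' with h7 | h7 | h7
          · -- D ⊆ D' : contradiction via D ⊆ C
            have hDC : D ⊆ C := by
              intro y hy
              have hy' : y ∈ C' ∩ D' := ⟨h5 hy, h7 hy⟩
              rw [← eC'D'] at hy'
              exact h3 hy'.2
            exact absurd (Set.inter_eq_right.mpr hDC) hCD.2.2
          · -- D' ⊆ D : contradiction
            exact absurd (Set.inter_eq_left.mpr (h6.trans h7)) hCD.2.1
          · -- Overlap D D'
            have eD : D ∩ C = D ∩ D' :=
              hL D (hS₂ hDT) C (hS hCS) D' (hS₃ hD'T) (overlap_symm hCD) h7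
            have eD' : D' ∩ C' = D' ∩ D :=
              hL D' (hS₃ hD'T) C' (hS hC'S) D (hS₂ hDT) (overlap_symm hC'D')
                (overlap_symm h7)
            calc C ∩ ⋂₀ S₂ = C ∩ D := eCD
              _ = D ∩ C := Set.inter_comm _ _
              _ = D ∩ D' := eD
              _ = D' ∩ D := Set.inter_comm _ _
              _ = D' ∩ C' := eD'.symm
              _ = C' ∩ D' := Set.inter_comm _ _
              _ = C' ∩ ⋂₀ S₃ := eC'D'.symm
        · -- Overlap D' C
          have eCD' : C ∩ ⋂₀ S₂ = C ∩ D' :=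
            inter_sInter_eq hL (hS hCS) hS₂ hC2 (hS₃ hD'T) (overlap_symm h6)
          have eD' : D' ∩ C = D' ∩ C' :=
            hL D' (hS₃ hD'T) C (hS hCS) C' (hS hC'S) h6 (overlap_symm hC'D')
          calc C ∩ ⋂₀ S₂ = C ∩ D' := eCD'
            _ = D' ∩ C := Set.inter_comm _ _
            _ = D' ∩ C' := eD'
            _ = C' ∩ D' := Set.inter_comm _ _
            _ = C' ∩ ⋂₀ S₃ := eC'D'.symm
      · -- C' ⊆ D : contradiction
        exact absurd (Set.inter_eq_left.mpr (hsub.trans h5)) hCD.2.1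
      · -- Overlap D C'
        have eC'D : C' ∩ ⋂₀ S₃ = C' ∩ D :=
          inter_sInter_eq hL (hS hC'S) hS₃ hC'3 (hS₂ hDT) (overlap_symm h5)
        have eD : D ∩ C = D ∩ C' :=
          hL D (hS₂ hDT) C (hS hCS) C' (hS hC'S) (overlap_symm hCD) h5
        calc C ∩ ⋂₀ S₂ = C ∩ D := eCD
          _ = D ∩ C := Set.inter_comm _ _
          _ = D ∩ C' := eD
          _ = C' ∩ D := Set.inter_comm _ _
          _ = C' ∩ ⋂₀ S₃ := eC'D.symm
    · -- Overlap C' (⋂₀ S₂)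
      have e : C ∩ ⋂₀ S₂ = C' ∩ ⋂₀ S₂ :=
        crux hL (hS hCS) (hS hC'S) hCC' hS₂ hC2 h4
      have e' : C' ∩ ⋂₀ S₂ = C' ∩ ⋂₀ S₃ :=
        two_closures hL (hS hC'S) hS₂ hS₃ h4 hC'3
      exact e.trans e'
  · -- Overlap C (⋂₀ S₃)
    have eC : C ∩ ⋂₀ S₂ = C ∩ ⋂₀ S₃ :=
      two_closures hL (hS hCS) hS₂ hS₃ hC2 h3
    have e3 : C ∩ ⋂₀ S₃ = C' ∩ ⋂₀ S₃ :=
      crux hL (hS hCS) (hS hC'S) hCC' hS₃ h3 hC'3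
    exact eC.trans e3

/-- Cross: if `⋂₀ S` overlaps `⋂₀ S₂` and `⋂₀ S₃`, the intersections agree. -/
private lemma cross {𝒞 : Set (Set X)} (hL : PropertyL 𝒞)
    {S S₂ S₃ : Set (Set X)} (hS : S ⊆ 𝒞) (hS₂ : S₂ ⊆ 𝒞) (hS₃ : S₃ ⊆ 𝒞)
    (h12 : Overlap (⋂₀ S) (⋂₀ S₂)) (h13 : Overlap (⋂₀ S) (⋂₀ S₃)) :
    ⋂₀ S ∩ ⋂₀ S₂ = ⋂₀ S ∩ ⋂₀ S₃ := by
  have hex2 : ∃ C ∈ S, Overlap C (⋂₀ S₂) :=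
    (exists_overlap_mem (overlap_symm h12)).imp fun C h => ⟨h.1, overlap_symm h.2⟩
  have hex3 : ∃ C ∈ S, Overlap C (⋂₀ S₃) :=
    (exists_overlap_mem (overlap_symm h13)).imp fun C h => ⟨h.1, overlap_symm h.2⟩
  obtain ⟨C, hCS, hC2⟩ := hex2
  obtain ⟨C', hC'S, hC'3⟩ := hex3
  have e1 : ⋂₀ S ∩ ⋂₀ S₂ = C ∩ ⋂₀ S₂ := sInter_inter_eq hL hS hS₂ h12 hCS hC2
  have e2 : ⋂₀ S ∩ ⋂₀ S₃ = C' ∩ ⋂₀ S₃ := sInter_inter_eq hL hS hS₃ h13 hC'S hC'3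
  rw [e1, e2]
  have hAne : (⋂₀ S).Nonempty := h12.1.mono Set.inter_subset_left
  have hCC' : (C ∩ C').Nonempty :=
    hAne.mono (fun y hy => ⟨Set.mem_sInter.mp hy C hCS, Set.mem_sInter.mp hy C' hC'S⟩)
  rcases tri hCC' with h | h | h
  · exact cross_sub hL hS hS₂ hS₃ h12 h13 hCS hC'S hC2 hC'3 h
  · exact (cross_sub hL hS hS₃ hS₂ h13 h12 hC'S hCS hC'3 hC2 h).symm
  · calc C ∩ ⋂₀ S₂ = C ∩ C' := inter_sInter_eq hL (hS hCS) hS₂ hC2 (hS hC'S) h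
      _ = C' ∩ C := Set.inter_comm _ _
      _ = C' ∩ ⋂₀ S₃ :=
        (inter_sInter_eq hL (hS hC'S) hS₃ hC'3 (hS hCS) (overlap_symm h)).symm

end LAux

/-- A clustering system satisfies (L) iff its intersection closure
satisfies (L). -/
theorem propertyL_iff_interClosure_propertyL (X : Type) [Fintype X]
    (𝒞 : Set (Set X)) (h𝒞 : IsClusteringSystem 𝒞) :
    PropertyL 𝒞 ↔ PropertyL (interClosure 𝒞) := by
  constructor
  · intro hL A₁ hA₁ A₂ hA₂ A₃ hA₃ o12 o13
    obtain ⟨-, S₁, hS₁, -, rfl⟩ := hA₁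
    obtain ⟨-, S₂, hS₂, -, rfl⟩ := hA₂
    obtain ⟨-, S₃, hS₃, -, rfl⟩ := hA₃
    exact cross hL hS₁ hS₂ hS₃ o12 o13
  · intro hL C₁ h1 C₂ h2 C₃ h3 o12 o13
    have mem : ∀ C ∈ 𝒞, C.Nonempty → C ∈ interClosure 𝒞 := fun C hC hne =>
      ⟨hne, {C}, Set.singleton_subset_iff.mpr hC, Set.singleton_nonempty C,
        (Set.sInter_singleton (s := C)).symm⟩
    exact hL C₁ (mem C₁ h1 (o12.1.mono Set.inter_subset_left)) C₂
      (mem C₂ h2 (o12.1.mono Set.inter_subset_right)) C₃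
      (mem C₃ h3 (o13.1.mono Set.inter_subset_right)) o12 o13

end PhyloNet
end
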